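/- Let Φ : (ℂ × ℝ) \ {0} → ℂ × ℝ be the inversion Φ(ξ, s) = (ξ/(|ξ|² + s²), s/(|ξ|² + s²)). Let ζ₀ ∈ ℂ with ζ₀ ≠ 0 and set ζ₀′ = ζ₀/|ζ₀|². Then for every (ζ, w) ∈ ℂ × ℝ with w > 0, writing (ζ′, w′) = Φ(ζ, w), the negative of the real Fréchet derivative of Φ at (ζ′, w′) applied to the vector (i·(ζ′ − ζ₀′), 0) equals (i·w²/conj(ζ₀) + i·ζ²/ζ₀ − i·ζ, −2w·Im(ζ/ζ₀)). -/

import Mathlib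

open Complex

set_option maxHeartbeats 1000000 in
private lemma inv_eval (p₀ : ℂ × ℝ) (hp : ‖p₀.1‖ ^ 2 + p₀.2 ^ 2 ≠ 0) (v : ℂ × ℝ) :
    (fderiv ℝ (fun q : ℂ × ℝ => (‖q.1‖ ^ 2 + q.2 ^ 2)⁻¹ • q) p₀) v =
      (‖p₀.1‖ ^ 2 + p₀.2 ^ 2)⁻¹ • v +
      ((-((‖p₀.1‖ ^ 2 + p₀.2 ^ 2) ^ 2)⁻¹) *
        (2 * (inner ℝ p₀.1 v.1 : ℝ) + 2 * p₀.2 * v.2)) • p₀ := by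
  have h1 : HasFDerivAt (fun q : ℂ × ℝ => ‖q.1‖ ^ 2)
      (2 • (innerSL ℝ p₀.1).comp (ContinuousLinearMap.fst ℝ ℂ ℝ)) p₀ :=
    (hasFDerivAt_fst (p := p₀)).norm_sq
  have h2 : HasFDerivAt (fun q : ℂ × ℝ => q.2 ^ 2)
      ((2 * p₀.2 ^ 1) • (ContinuousLinearMap.snd ℝ ℂ ℝ)) p₀ :=
    (hasDerivAt_pow 2 p₀.2).comp_hasFDerivAt p₀ hasFDerivAt_snd
  have hN := h1.add h2
  have hInv : HasFDerivAt (fun q : ℂ × ℝ => (‖q.1‖ ^ 2 + q.2 ^ 2)⁻¹)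
      (-((‖p₀.1‖ ^ 2 + p₀.2 ^ 2) ^ 2)⁻¹ •
        (2 • (innerSL ℝ p₀.1).comp (ContinuousLinearMap.fst ℝ ℂ ℝ) +
         (2 * p₀.2 ^ 1) • (ContinuousLinearMap.snd ℝ ℂ ℝ))) p₀ :=
    (hasDerivAt_inv hp).comp_hasFDerivAt p₀ hN
  have hF' : HasFDerivAt (fun q : ℂ × ℝ => (‖q.1‖ ^ 2 + q.2 ^ 2)⁻¹ • q)
      ((‖p₀.1‖ ^ 2 + p₀.2 ^ 2)⁻¹ • ContinuousLinearMap.id ℝ (ℂ × ℝ) +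
        (-((‖p₀.1‖ ^ 2 + p₀.2 ^ 2) ^ 2)⁻¹ •
          (2 • (innerSL ℝ p₀.1).comp (ContinuousLinearMap.fst ℝ ℂ ℝ) +
           (2 * p₀.2 ^ 1) • (ContinuousLinearMap.snd ℝ ℂ ℝ))).smulRight p₀) p₀ :=
    hInv.smul (hasFDerivAt_id p₀)
  rw [hF'.fderiv]
  simp [ContinuousLinearMap.smulRight_apply, mul_comm, mul_assoc, mul_add,
    mul_left_comm, pow_one, smul_smul, neg_smul]
  congr 1
  ring

set_option maxHeartbeats 1000000 in
/-- Lemma (killingrot): since the inversion `Φ(ξ,s) = (ξ,s)/(|ξ|²+s²)` is an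
indirect isometry, the Killing field of the rotation about the geodesic
`(ζ₀, 0)` is `−Φ_*Z` where `Z(ξ,s) = (i(ξ − ζ₀′), 0)` is the Killing field of
the rotation about `(ζ₀′, ∞)`:
`−dΦ_{Φ(P)}(Z(Φ(P))) = (iw²/ζ̄₀ + iζ²/ζ₀ − iζ, −2w·Im(ζ/ζ₀))` for `P = (ζ,w)`, `w > 0`. -/
theorem stmt6 (Φ : ℂ × ℝ → ℂ × ℝ)
    (hΦ : ∀ p : ℂ × ℝ, Φ p = (p.1 / ((Complex.normSq p.1 + p.2 ^ 2 : ℝ) : ℂ),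
      p.2 / (Complex.normSq p.1 + p.2 ^ 2)))
    (ζ₀ : ℂ) (hζ₀ : ζ₀ ≠ 0) (ζ₀' : ℂ) (hζ₀' : ζ₀' = ζ₀ / ((Complex.normSq ζ₀ : ℝ) : ℂ))
    (ζ : ℂ) (w : ℝ) (hw : 0 < w) :
    - fderiv ℝ Φ (Φ (ζ, w)) ((Complex.I * ((Φ (ζ, w)).1 - ζ₀'), (0 : ℝ))) =
      (Complex.I * (w : ℂ) ^ 2 / (starRingEnd ℂ) ζ₀ + Complex.I * ζ ^ 2 / ζ₀ - Complex.I * ζ,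
        - (2 * w * (ζ / ζ₀).im)) := by
  have hfun : Φ = fun q : ℂ × ℝ => (‖q.1‖ ^ 2 + q.2 ^ 2)⁻¹ • q := by
    funext q
    rw [hΦ q]
    have hns : Complex.normSq q.1 = ‖q.1‖ ^ 2 := by
      rw [Complex.sq_norm]
    ext
    · simp [hns, Complex.real_smul, div_eq_mul_inv, Complex.ofReal_inv, mul_comm]
    · simp [hns, div_eq_mul_inv, mul_comm]
  subst hfun
  set D : ℝ := ‖ζ‖ ^ 2 + w ^ 2 with hDdef
  have hD : 0 < D := by positivity
  have hDne : D ≠ 0 := hD.ne'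
  have hζn : (‖ζ‖ ^ 2 : ℝ) = Complex.normSq ζ := by
    rw [Complex.sq_norm]
  have hns0 : Complex.normSq ζ₀ ≠ 0 := fun h => hζ₀ (Complex.normSq_eq_zero.1 h)
  have hp₀ : (fun q : ℂ × ℝ => (‖q.1‖ ^ 2 + q.2 ^ 2)⁻¹ • q) (ζ, w)
      = (D⁻¹ • ζ, D⁻¹ * w) := rfl
  set p₀ : ℂ × ℝ := (D⁻¹ • ζ, D⁻¹ * w) with hp₀def
  rw [hp₀]
  have hNp₀ : ‖p₀.1‖ ^ 2 + p₀.2 ^ 2 = D⁻¹ := by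
    have h1 : ‖p₀.1‖ ^ 2 = D⁻¹ ^ 2 * ‖ζ‖ ^ 2 := by
      rw [hp₀def, norm_smul, Real.norm_eq_abs, abs_of_pos (inv_pos.2 hD)]; ring
    have h2 : p₀.2 ^ 2 = D⁻¹ ^ 2 * w ^ 2 := by rw [hp₀def]; ring
    rw [h1, h2, ← mul_add, ← hDdef, sq]
    field_simp
  have hp : ‖p₀.1‖ ^ 2 + p₀.2 ^ 2 ≠ 0 := by rw [hNp₀]; positivity
  rw [inv_eval p₀ hp, hNp₀, inv_inv]
  -- the inner product
  have hin : (inner ℝ p₀.1 (Complex.I * (p₀.1 - ζ₀')) : ℝ) = -(D⁻¹ * (ζ / ζ₀).im) := by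
    simp only [hp₀def, hζ₀', RCLike.inner_apply, starRingEnd_apply]
    simp [Complex.mul_re, Complex.mul_im, Complex.div_re, Complex.div_im,
      Complex.normSq_apply, Complex.real_smul]
    have h0 : ζ₀.re * ζ₀.re + ζ₀.im * ζ₀.im ≠ 0 := by
      rwa [Complex.normSq_apply] at hns0
    field_simp [h0]
    ring
  have hsc : -((D⁻¹ : ℝ) ^ 2)⁻¹ *
      (2 * (inner ℝ p₀.1 (Complex.I * (p₀.1 - ζ₀')) : ℝ) + 2 * p₀.2 * 0) =
      2 * D * (ζ / ζ₀).im := by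
    rw [hin]
    field_simp
    ring
  rw [hsc]
  rw [Prod.ext_iff]
  have hcz : (starRingEnd ℂ) ζ₀ ≠ 0 := by simpa using hζ₀
  have hDc : ((D : ℝ) : ℂ) ≠ 0 := Complex.ofReal_ne_zero.2 hDne
  have hDC : ((D : ℝ) : ℂ) = ζ * (starRingEnd ℂ) ζ + (w : ℂ) ^ 2 := by
    rw [hDdef, hζn]
    push_cast
    rw [Complex.mul_conj]
  have him : (((ζ / ζ₀).im : ℝ) : ℂ) =
      (ζ / ζ₀ - (starRingEnd ℂ) ζ / (starRingEnd ℂ) ζ₀) / (2 * Complex.I) := by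
    rw [← map_div₀]
    rw [eq_div_iff (by simp [Complex.I_ne_zero])]
    have := Complex.sub_conj (ζ / ζ₀)
    rw [this]
    push_cast
    ring
  constructor
  · show -(D • (Complex.I * (p₀.1 - ζ₀')) + (2 * D * (ζ / ζ₀).im) • p₀.1) = _
    rw [hp₀def]
    simp only [Complex.real_smul, Complex.ofReal_mul, Complex.ofReal_inv, smul_eq_mul,
      Complex.ofReal_ofNat]
    rw [him, hζ₀']
    have hns0' : ((Complex.normSq ζ₀ : ℝ) : ℂ) = ζ₀ * (starRingEnd ℂ) ζ₀ :=
      (Complex.mul_conj ζ₀).symm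
    rw [hns0']
    field_simp [Complex.I_ne_zero, hDc, hζ₀, hcz]
    rw [hDC]
    ring_nf
    simp [Complex.I_sq]
    ring_nf
  · show -(D • (0 : ℝ) + (2 * D * (ζ / ζ₀).im) • p₀.2) = _
    rw [hp₀def]
    simp only [smul_eq_mul]
    field_simp
    ring
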